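/- In the Hopcroft–Karp framework: if augmenting paths are found in phases where each phase augments along a maximal set of vertex-disjoint shortest augmenting paths, and shortest augmenting path length strictly increases between phases, then the total number of phases needed to reach a maximum matching of size κ is at most 2⌈√κ⌉ + 1. -/

import Mathlib

/-- An augmenting path with respect to a matching `M`. -/
def SimpleGraph.Subgraph.IsAugPath {V : Type*} {G : SimpleGraph V} (M : G.Subgraph)
    {u v : V} (p : G.Walk u v) : Prop :=
  p.IsPath ∧ u ∉ M.support ∧ v ∉ M.support ∧ Odd p.length ∧
    List.Chain' (fun a b => (a ∈ M.edgeSet) ≠ (b ∈ M.edgeSet)) p.edges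

namespace HKaux
open SimpleGraph

variable {V : Type*} {G : SimpleGraph V}

/-- Alternating sequence: apply `b` from even indices, `a` from odd indices. -/
def seq (a b : V → V) (u : V) : ℕ → V
  | 0 => u
  | n+1 => if n % 2 = 0 then b (seq a b u n) else a (seq a b u n)

/-- Validity of step `n`. -/
def cont (A B : G.Subgraph) (a b : V → V) (u : V) (n : ℕ) : Prop :=
  if n % 2 = 0 then seq a b u n ∈ B.support else seq a b u n ∈ A.support

/-- Bundle of hypotheses on partner functions. -/
structure Pf (A B : G.Subgraph) (a b : V → V) : Prop where
  ha1 : ∀ v ∈ A.support, A.Adj v (a v)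
  ha2 : ∀ v w, A.Adj v w → a v = w
  hb1 : ∀ v ∈ B.support, B.Adj v (b v)
  hb2 : ∀ v w, B.Adj v w → b v = w

variable {A B : G.Subgraph} {a b : V → V} {u u' : V}

lemma Pf.ainv (H : Pf A B a b) {v : V} (hv : v ∈ A.support) : a (a v) = v :=
  H.ha2 _ _ (H.ha1 v hv).symm

lemma Pf.binv (H : Pf A B a b) {v : V} (hv : v ∈ B.support) : b (b v) = v :=
  H.hb2 _ _ (H.hb1 v hv).symm

lemma seq_succ_even {n : ℕ} (h : n % 2 = 0) : seq a b u (n+1) = b (seq a b u n) := by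
  simp [seq, h]

lemma seq_succ_odd {n : ℕ} (h : n % 2 = 1) : seq a b u (n+1) = a (seq a b u n) := by
  simp [seq, h]

lemma B_adj_step (H : Pf A B a b) {t : ℕ} (hc : cont A B a b u t) (ht : t % 2 = 0) :
    B.Adj (seq a b u t) (seq a b u (t+1)) := by
  rw [seq_succ_even ht]
  exact H.hb1 _ (by simpa [cont, ht] using hc)

lemma A_adj_step (H : Pf A B a b) {t : ℕ} (hc : cont A B a b u t) (ht : t % 2 = 1) :
    A.Adj (seq a b u t) (seq a b u (t+1)) := by
  rw [seq_succ_odd ht]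
  exact H.ha1 _ (by simpa [cont, ht] using hc)

lemma adj_step (H : Pf A B a b) {t : ℕ} (hc : cont A B a b u t) :
    G.Adj (seq a b u t) (seq a b u (t+1)) := by
  rcases Nat.mod_two_eq_zero_or_one t with ht | ht
  · exact B.adj_sub (B_adj_step H hc ht)
  · exact A.adj_sub (A_adj_step H hc ht)

lemma mem_B_succ (H : Pf A B a b) {t : ℕ} (hc : cont A B a b u t) (ht : t % 2 = 0) :
    seq a b u (t+1) ∈ B.support :=
  B.mem_support.2 ⟨_, (B_adj_step H hc ht).symm⟩

lemma mem_A_succ (H : Pf A B a b) {t : ℕ} (hc : cont A B a b u t) (ht : t % 2 = 1) :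
    seq a b u (t+1) ∈ A.support :=
  A.mem_support.2 ⟨_, (A_adj_step H hc ht).symm⟩

lemma bwd_even (H : Pf A B a b) {t : ℕ} (hc : cont A B a b u t) (ht : t % 2 = 0) :
    b (seq a b u (t+1)) = seq a b u t := by
  rw [seq_succ_even ht]
  exact H.binv (by simpa [cont, ht] using hc)

lemma bwd_odd (H : Pf A B a b) {t : ℕ} (hc : cont A B a b u t) (ht : t % 2 = 1) :
    a (seq a b u (t+1)) = seq a b u t := by
  rw [seq_succ_odd ht]
  exact H.ainv (by simpa [cont, ht] using hc)

lemma cont_even {t : ℕ} (ht : t % 2 = 0) :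
    cont A B a b u t ↔ seq a b u t ∈ B.support := by simp [cont, ht]

lemma cont_odd {t : ℕ} (ht : t % 2 = 1) :
    cont A B a b u t ↔ seq a b u t ∈ A.support := by simp [cont, ht]

/-- positions of the same parity in two runs coincide only trivially. -/
lemma same_parity (H : Pf A B a b) (hu : u ∉ A.support) (hu' : u' ∉ A.support)
    {k m n n' : ℕ} (hv : ∀ s < n, cont A B a b u s) (hv' : ∀ s < n', cont A B a b u' s)
    (hk : k ≤ n) (hm : m ≤ n') (hpar : k % 2 = m % 2)
    (he : seq a b u k = seq a b u' m) : u = u' ∧ k = m := by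
  induction k generalizing m with
  | zero =>
    rcases Nat.eq_zero_or_pos m with hm0 | hm0
    · subst hm0; exact ⟨he, rfl⟩
    · exfalso
      -- m even and ≥ 1, so m ≥ 2, so seq u' m ∈ A.support; but it equals u
      obtain ⟨m', rfl⟩ : ∃ m', m = m' + 1 := ⟨m - 1, by omega⟩
      have hm' : m' % 2 = 1 := by omega
      have : seq a b u' (m'+1) ∈ A.support :=
        mem_A_succ H (hv' m' (by omega)) hm'
      rw [← he] at this
      exact hu this
  | succ k ih =>
    rcases Nat.eq_zero_or_pos m with hm0 | hm0
    · exfalso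
      subst hm0
      have hk' : k % 2 = 1 := by omega
      have : seq a b u (k+1) ∈ A.support := mem_A_succ H (hv k (by omega)) hk'
      rw [he] at this
      exact hu' this
    · obtain ⟨m', rfl⟩ : ∃ m', m = m' + 1 := ⟨m - 1, by omega⟩
      have hpar' : k % 2 = m' % 2 := by omega
      have hck : cont A B a b u k := hv k (by omega)
      have hcm : cont A B a b u' m' := hv' m' (by omega)
      have he' : seq a b u k = seq a b u' m' := by
        rcases Nat.mod_two_eq_zero_or_one k with hk2 | hk2
        · rw [← bwd_even H hck hk2, ← bwd_even H hcm (by omega), he]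
        · rw [← bwd_odd H hck hk2, ← bwd_odd H hcm (by omega), he]
      obtain ⟨h1, h2⟩ := ih (by omega) (m := m') (by omega) hpar' he'
      exact ⟨h1, by omega⟩

/-- positions of opposite parity in a single run never coincide. -/
lemma cross_parity_self (H : Pf A B a b) {k m n : ℕ}
    (hv : ∀ s < n, cont A B a b u s) (hk : k < m) (hm : m ≤ n)
    (hpar : k % 2 ≠ m % 2) (he : seq a b u k = seq a b u m) : False := by
  induction m using Nat.strong_induction_on generalizing k with
  | _ m ih =>
  rcases eq_or_lt_of_le (show k + 1 ≤ m by omega) with h1 | h1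
  · -- consecutive equal: contradiction with irreflexivity
    subst h1
    exact (adj_step H (hv k (by omega))).ne he
  · -- m ≥ k + 2; in fact m ≥ k + 3 since parity differs
    obtain ⟨m', rfl⟩ : ∃ m', m = m' + 1 := ⟨m - 1, by omega⟩
    have hck : cont A B a b u k := hv k (by omega)
    have hcm : cont A B a b u m' := hv m' (by omega)
    have hpar2 : m' % 2 = k % 2 := by omega
    have he' : seq a b u (k+1) = seq a b u m' := by
      rcases Nat.mod_two_eq_zero_or_one k with hk2 | hk2
      · rw [seq_succ_even hk2, he, ← bwd_even H hcm (by omega)]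
      · rw [seq_succ_odd hk2, he, ← bwd_odd H hcm (by omega)]
    exact ih m' (by omega) (k := k+1) (by omega) (by omega) (by omega) he'


/-- positions of opposite parity in two runs: forces the first run to end (oddly) at `u'`. -/
lemma cross_parity (H : Pf A B a b) (hu' : u' ∉ A.support)
    {k m L n' : ℕ} (hv : ∀ s < L, cont A B a b u s) (hstop : ¬ cont A B a b u L)
    (hv' : ∀ s < n', cont A B a b u' s)
    (hk : k ≤ L) (hm : m ≤ n') (hpar : k % 2 ≠ m % 2)
    (he : seq a b u k = seq a b u' m) :
    L % 2 = 1 ∧ seq a b u L = u' := by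
  have key : ∀ j ≤ m, k + j ≤ L ∧ seq a b u (k + j) = seq a b u' (m - j) := by
    intro j hj
    induction j with
    | zero => exact ⟨hk, by simpa using he⟩
    | succ j ih =>
      obtain ⟨hle, heq⟩ := ih (by omega)
      -- k + j and m - j have opposite parity
      have hpar2 : (k + j) % 2 ≠ (m - j) % 2 := by omega
      -- first: k + j < L
      have hlt : k + j < L := by
        rcases eq_or_lt_of_le hle with hEq | h; swap
        · exact h
        · exfalso
          have hmj : 1 ≤ m - j := by omega
          rcases Nat.mod_two_eq_zero_or_one (k + j) with hp | hp
          · -- L even, so seq u L ∉ B.support, but seq u' (m-j) with m-j odd is in B.support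
            have hmjodd : (m - j) % 2 = 1 := by omega
            obtain ⟨r, hr⟩ : ∃ r, m - j = r + 1 := ⟨m - j - 1, by omega⟩
            have : seq a b u' (m - j) ∈ B.support := by
              rw [hr]; exact mem_B_succ H (hv' r (by omega)) (by omega)
            rw [← heq, hEq] at this
            have : cont A B a b u L := by simpa [cont, ← hEq, hp] using this
            exact hstop this
          · -- L odd, so seq u L ∉ A.support, but seq u' (m-j) with m-j even ≥ 2 in A.support
            have hmjeven : (m - j) % 2 = 0 := by omega
            obtain ⟨r, hr⟩ : ∃ r, m - j = r + 1 := ⟨m - j - 1, by omega⟩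
            have : seq a b u' (m - j) ∈ A.support := by
              rw [hr]; exact mem_A_succ H (hv' r (by omega)) (by omega)
            rw [← heq, hEq] at this
            have : cont A B a b u L := by simpa [cont, ← hEq, hp] using this
            exact hstop this
      refine ⟨by omega, ?_⟩
      have hcm : cont A B a b u' (m - j - 1) := hv' _ (by omega)
      have hms : m - j - 1 + 1 = m - j := by omega
      have hparm : (m - j - 1) % 2 = (k + j) % 2 := by omega
      have hkj1 : k + (j + 1) = (k + j) + 1 := by omega
      have hmj1 : m - (j + 1) = m - j - 1 := by omega
      rw [hkj1, hmj1]
      rcases Nat.mod_two_eq_zero_or_one (k + j) with hp | hp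
      · rw [seq_succ_even hp, heq, ← hms, bwd_even H hcm (by omega)]; congr 1
      · rw [seq_succ_odd hp, heq, ← hms, bwd_odd H hcm (by omega)]; congr 1
  obtain ⟨hle, heq⟩ := key m le_rfl
  simp only [Nat.sub_self] at heq
  -- k + m is odd
  have hkm : (k + m) % 2 = 1 := by omega
  rcases eq_or_lt_of_le hle with hEq | h
  · exact ⟨by omega, by rw [← hEq]; exact heq⟩
  · exfalso
    have : cont A B a b u (k + m) := hv _ h
    simp only [cont, hkm] at this
    rw [heq] at this
    simp at this
    exact hu' this

/-- the reverse of a good run is the run from its endpoint. -/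
lemma reverse_run (H : Pf A B a b) {L : ℕ}
    (hv : ∀ s < L, cont A B a b u s) (hL : L % 2 = 1) :
    (∀ j ≤ L, seq a b (seq a b u L) j = seq a b u (L - j)) := by
  intro j hj
  induction j with
  | zero => simp [seq]
  | succ j ih =>
    have hj' : j ≤ L := by omega
    have heq := ih hj'
    have hcm : cont A B a b u (L - j - 1) := hv _ (by omega)
    have hms : L - j - 1 + 1 = L - j := by omega
    have hparm : (L - j - 1) % 2 = j % 2 := by omega
    have hmj1 : L - (j + 1) = L - j - 1 := by omega
    rw [hmj1]
    rcases Nat.mod_two_eq_zero_or_one j with hp | hp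
    · rw [seq_succ_even hp, heq, ← hms, bwd_even H hcm (by omega)]; congr 1
    · rw [seq_succ_odd hp, heq, ← hms, bwd_odd H hcm (by omega)]; congr 1

/-- edges of the run are in `A` exactly at odd positions. -/
lemma edge_mem_iff (H : Pf A B a b) (hu : u ∉ A.support) {j n : ℕ}
    (hv : ∀ s < n, cont A B a b u s) (hj : j < n) :
    (s(seq a b u j, seq a b u (j+1)) ∈ A.edgeSet ↔ j % 2 = 1) := by
  constructor
  · intro hmem
    rw [SimpleGraph.Subgraph.mem_edgeSet] at hmem
    by_contra hp
    have hp : j % 2 = 0 := by omega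
    rcases Nat.eq_zero_or_pos j with h0 | h0
    · subst h0
      exact hu (A.mem_support.2 ⟨_, hmem⟩)
    · obtain ⟨j', rfl⟩ : ∃ j', j = j' + 1 := ⟨j - 1, by omega⟩
      have hcj' : cont A B a b u j' := hv j' (by omega)
      have hj'odd : j' % 2 = 1 := by omega
      have h1 : a (seq a b u (j'+1)) = seq a b u j' := bwd_odd H hcj' hj'odd
      have h2 : a (seq a b u (j'+1)) = seq a b u (j'+1+1) := H.ha2 _ _ hmem
      have : seq a b u j' = seq a b u (j'+2) := by rw [← h1, h2]
      have := same_parity H hu hu (n := n) (n' := n) hv hv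
        (k := j') (by omega) (m := j'+2) (by omega) (by omega) this
      omega
  · intro hp
    rw [SimpleGraph.Subgraph.mem_edgeSet]
    exact A_adj_step H (hv j hj) hp


/-- Build a walk from a sequence of adjacent vertices. -/
lemma exists_walk (L : ℕ) (f : ℕ → V) (hf : ∀ t < L, G.Adj (f t) (f (t+1))) :
    ∃ p : G.Walk (f 0) (f L), p.length = L ∧
      p.support = (List.range (L+1)).map f ∧
      p.edges = (List.range L).map (fun j => s(f j, f (j+1))) := by
  induction L generalizing f with
  | zero => exact ⟨SimpleGraph.Walk.nil, by simp [List.range_succ]⟩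
  | succ L ih =>
    obtain ⟨q, hq1, hq2, hq3⟩ := ih (fun j => f (j+1)) (fun t ht => hf (t+1) (by omega))
    refine ⟨SimpleGraph.Walk.cons (hf 0 (by omega)) q, by simp [hq1], ?_, ?_⟩
    · rw [SimpleGraph.Walk.support_cons, hq2, List.range_succ_eq_map (n := L+1),
        List.map_cons, List.map_map]
      rfl
    · rw [SimpleGraph.Walk.edges_cons, hq3, List.range_succ_eq_map (n := L),
        List.map_cons, List.map_map]
      rfl

/-- Every vertex of a matching has a unique partner. -/
lemma exists_partner {N : G.Subgraph} (hN : N.IsMatching) :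
    ∃ f : V → V, (∀ v ∈ N.support, N.Adj v (f v)) ∧ (∀ v w, N.Adj v w → f v = w) := by
  classical
  refine ⟨fun v => if h : v ∈ N.verts then (hN h).choose else v, fun v hv => ?_, fun v w hvw => ?_⟩
  · have hv' : v ∈ N.verts := by rw [← hN.support_eq_verts]; exact hv
    simpa [hv'] using (hN hv').choose_spec.1
  · have hv' : v ∈ N.verts := N.edge_vert hvw
    simp only [hv', dif_pos]
    exact ((hN hv').choose_spec.2 w hvw).symm ▸ ((hN hv').choose_spec.2 w hvw) ▸ rfl

/-- the support of a matching has twice as many vertices as edges. -/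
lemma matching_support_ncard {V : Type*} [Fintype V] {G : SimpleGraph V} {N : G.Subgraph}
    (hN : N.IsMatching) : N.support.ncard = 2 * N.edgeSet.ncard := by
  classical
  obtain ⟨f, hf1, hf2⟩ := exists_partner hN
  have hSF : N.support.ncard = (Set.toFinset N.support).card := by
    rw [Set.ncard_eq_toFinset_card']
  have hEF : N.edgeSet.ncard = (Set.toFinset N.edgeSet).card := by
    rw [Set.ncard_eq_toFinset_card']
  rw [hSF, hEF]
  have hmap : ∀ v ∈ Set.toFinset N.support, (s(v, f v) : Sym2 V) ∈ Set.toFinset N.edgeSet := by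
    intro v hv
    rw [Set.mem_toFinset] at hv ⊢
    exact hf1 v hv
  have hfib : ∀ e ∈ Set.toFinset N.edgeSet,
      ((Set.toFinset N.support).filter (fun v => (s(v, f v) : Sym2 V) = e)).card = 2 := by
    intro e he
    rw [Set.mem_toFinset] at he
    induction e with
    | h x y =>
      rw [SimpleGraph.Subgraph.mem_edgeSet] at he
      have hxy : x ≠ y := he.ne
      have hfx : f x = y := hf2 _ _ he
      have hfy : f y = x := hf2 _ _ he.symm
      have : (Set.toFinset N.support).filter (fun v => (s(v, f v) : Sym2 V) = s(x, y))
          = {x, y} := by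
        ext v
        simp only [Finset.mem_filter, Set.mem_toFinset, Finset.mem_insert, Finset.mem_singleton]
        constructor
        · rintro ⟨hv, he'⟩
          rw [Sym2.eq_iff] at he'
          rcases he' with ⟨h1, _⟩ | ⟨h1, _⟩
          · exact Or.inl h1
          · exact Or.inr h1
        · rintro (rfl | rfl)
          · exact ⟨N.mem_support.2 ⟨_, he⟩, by rw [hfx]⟩
          · exact ⟨N.mem_support.2 ⟨_, he.symm⟩, by rw [hfy, Sym2.eq_swap]⟩
      rw [this, Finset.card_insert_of_notMem (by simpa using hxy), Finset.card_singleton]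
  rw [Finset.card_eq_sum_card_fiberwise hmap, Finset.sum_congr rfl hfib, Finset.sum_const,
    smul_eq_mul, mul_comm]


end HKaux

namespace HKaux

theorem hk_count {V : Type*} [Fintype V] {G : SimpleGraph V} {A B : G.Subgraph}
    (hA : A.IsMatching) (hB : B.IsMatching) (i : ℕ)
    (hlen : ∀ (u v : V) (p : G.Walk u v), A.IsAugPath p → 2 * i + 1 ≤ p.length)
    {d : ℕ} (hd : A.edgeSet.ncard + d = B.edgeSet.ncard) :
    i * d ≤ A.edgeSet.ncard := by
  classical
  obtain ⟨a, ha1, ha2⟩ := exists_partner hA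
  obtain ⟨b, hb1, hb2⟩ := exists_partner hB
  have H : Pf A B a b := ⟨ha1, ha2, hb1, hb2⟩
  set L : V → ℕ := fun u => sInf {n | ¬ cont A B a b u n} with hLdef
  -- basic facts about the stopping time
  have hvL : ∀ u, ∀ s < L u, cont A B a b u s := by
    intro u s hs
    have : s ∉ {n | ¬ cont A B a b u n} := Nat.notMem_of_lt_sInf hs
    rw [Set.mem_setOf_eq] at this
    exact not_not.1 this
  have hstop_ex : ∀ u, u ∉ A.support → u ∈ B.support → ∃ n, ¬ cont A B a b u n := by
    intro u hu1 hu2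
    by_contra hc
    push_neg at hc
    obtain ⟨x, y, hxy, he⟩ := Finite.exists_ne_map_eq_of_infinite (seq a b u)
    rcases eq_or_ne (x % 2) (y % 2) with hp | hp
    · exact hxy (same_parity H hu1 hu1 (n := x + y + 1) (n' := x + y + 1)
        (fun s _ => hc s) (fun s _ => hc s) (by omega) (by omega) hp he).2
    · rcases Nat.lt_or_ge x y with hlt | hge
      · exact cross_parity_self H (n := y + 1) (fun s _ => hc s) hlt (by omega) hp he
      · exact cross_parity_self H (n := x + 1) (fun s _ => hc s)
          (by omega) (by omega) (by omega) he.symm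
  have hsL : ∀ u, u ∉ A.support → u ∈ B.support → ¬ cont A B a b u (L u) := by
    intro u hu1 hu2
    have := Nat.sInf_mem (hstop_ex u hu1 hu2)
    exact this
  have hcont0 : ∀ u, u ∈ B.support → cont A B a b u 0 := by
    intro u hu; simp [cont, seq, hu]
  have hLpos : ∀ u, u ∉ A.support → u ∈ B.support → 1 ≤ L u := by
    intro u hu1 hu2
    by_contra hc
    exact hsL u hu1 hu2 (by rw [show L u = 0 by omega]; exact hcont0 u hu2)
  have hendA : ∀ u, u ∉ A.support → u ∈ B.support → L u % 2 = 1 →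
      seq a b u (L u) ∉ A.support := by
    intro u h1 h2 ho
    have := hsL u h1 h2
    simpa [cont, ho] using this
  have hendB : ∀ u, u ∉ A.support → u ∈ B.support → L u % 2 = 0 →
      seq a b u (L u) ∉ B.support := by
    intro u h1 h2 ho
    have := hsL u h1 h2
    simpa [cont, ho] using this
  -- Finsets
  set SF : Finset V := Finset.univ.filter (fun u => u ∈ B.support ∧ u ∉ A.support) with hSF
  set S'F : Finset V := Finset.univ.filter (fun v => v ∈ A.support ∧ v ∉ B.support) with hS'F
  set GoodF : Finset V := SF.filter (fun u => L u % 2 = 1) with hGoodF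
  set BadF : Finset V := SF.filter (fun u => ¬ (L u % 2 = 1)) with hBadF
  have hmemSF : ∀ u ∈ SF, u ∈ B.support ∧ u ∉ A.support := by
    intro u hu; simpa [hSF] using hu
  have hmemGood : ∀ u ∈ GoodF, (u ∈ B.support ∧ u ∉ A.support) ∧ L u % 2 = 1 := by
    intro u hu
    rw [hGoodF, Finset.mem_filter] at hu
    exact ⟨hmemSF u hu.1, hu.2⟩
  -- cardinality bookkeeping
  have hsplit : GoodF.card + BadF.card = SF.card :=
    Finset.card_filter_add_card_filter_not _
  have hSFcard : SF.card = (B.support \ A.support).ncard := by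
    rw [Set.ncard_eq_toFinset_card']
    congr 1
    ext v
    simp [hSF, Set.mem_diff, and_comm]
  have hS'Fcard : S'F.card = (A.support \ B.support).ncard := by
    rw [Set.ncard_eq_toFinset_card']
    congr 1
    ext v
    simp [hS'F, Set.mem_diff, and_comm]
  have h1 : (B.support ∩ A.support).ncard + (B.support \ A.support).ncard = B.support.ncard :=
    Set.ncard_inter_add_ncard_diff_eq_ncard _ _ (Set.toFinite _)
  have h2 : (A.support ∩ B.support).ncard + (A.support \ B.support).ncard = A.support.ncard :=
    Set.ncard_inter_add_ncard_diff_eq_ncard _ _ (Set.toFinite _)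
  have h3 : (B.support ∩ A.support).ncard = (A.support ∩ B.support).ncard := by
    rw [Set.inter_comm]
  have hAsupp := matching_support_ncard hA
  have hBsupp := matching_support_ncard hB
  have hScards : SF.card = S'F.card + 2 * d := by
    rw [hSFcard, hS'Fcard]; omega
  -- bad runs inject into S'
  have hBadinj : BadF.card ≤ S'F.card := by
    apply Finset.card_le_card_of_injOn (fun u => seq a b u (L u))
    · intro u hu
      have hu : u ∈ BadF := hu
      rw [hBadF, Finset.mem_filter] at hu
      obtain ⟨hu2, hu1⟩ := hmemSF u hu.1
      have hL0 : L u % 2 = 0 := by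
        have := hu.2
        omega
      have hLp := hLpos u hu1 hu2
      obtain ⟨r, hr⟩ : ∃ r, L u = r + 1 := ⟨L u - 1, by omega⟩
      have hmemA : seq a b u (L u) ∈ A.support := by
        rw [hr]; exact mem_A_succ H (hvL u r (by omega)) (by omega)
      have hmemB : seq a b u (L u) ∉ B.support := hendB u hu1 hu2 hL0
      simp [hS'F, hmemA, hmemB]
    · intro u hu u' hu' he
      have hu : u ∈ BadF := hu
      have hu' : u' ∈ BadF := hu'
      rw [hBadF, Finset.mem_filter] at hu hu'
      obtain ⟨hu2, hu1⟩ := hmemSF u hu.1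
      obtain ⟨hu2', hu1'⟩ := hmemSF u' hu'.1
      exact (same_parity H hu1 hu1' (n := L u) (n' := L u') (hvL u) (hvL u')
        le_rfl le_rfl (by omega) he).1
  have hGoodcard : 2 * d ≤ GoodF.card := by omega
  -- edge sets of good runs
  set AEF : Finset (Sym2 V) := Set.toFinset A.edgeSet with hAEF
  set F : V → Finset (Sym2 V) :=
    fun u => (Finset.range (L u / 2)).image
      (fun k => s(seq a b u (2*k+1), seq a b u (2*k+2))) with hF
  -- facts about good runs
  have hgoodfacts : ∀ u ∈ GoodF, (2 * i + 1 ≤ L u ∧ i ≤ (F u).card) ∧ F u ⊆ AEF := by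
    intro u hu
    obtain ⟨⟨hu2, hu1⟩, hodd⟩ := hmemGood u hu
    obtain ⟨p, hp1, hp2, hp3⟩ := exists_walk (G := G) (L u) (seq a b u)
      (fun t ht => adj_step H (hvL u t ht))
    have hiaug : A.IsAugPath p := by
      refine ⟨?_, ?_, ?_, ?_, ?_⟩
      · rw [SimpleGraph.Walk.isPath_def, hp2]
        refine List.Nodup.map_on ?_ List.nodup_range
        intro x hx y hy hxy
        rw [List.mem_range] at hx hy
        rcases eq_or_ne (x % 2) (y % 2) with hp | hp
        · exact (same_parity H hu1 hu1 (n := L u) (n' := L u) (hvL u) (hvL u)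
            (by omega) (by omega) hp hxy).2
        · exfalso
          rcases Nat.lt_or_ge x y with hlt | hge
          · exact cross_parity_self H (hvL u) hlt (by omega) hp hxy
          · exact cross_parity_self H (hvL u) (show y < x by omega) (by omega)
              (by omega) hxy.symm
      · exact hu1
      · exact hendA u hu1 hu2 hodd
      · rw [hp1]; exact ⟨L u / 2, by omega⟩
      · rw [hp3]; show List.IsChain _ _; rw [List.isChain_map]
        obtain ⟨n, hn⟩ : ∃ n, L u = n + 1 := ⟨L u - 1, by omega⟩
        rw [hn, List.isChain_range_succ]
        intro m hm
        have e1 := edge_mem_iff H hu1 (hvL u) (show m < L u by omega)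
        have e2 := edge_mem_iff H hu1 (hvL u) (show m + 1 < L u by omega)
        intro hcontra
        rw [eq_iff_iff] at hcontra
        have : (m % 2 = 1) ↔ ((m + 1) % 2 = 1) := by
          rw [← e1, ← e2]
          exact_mod_cast hcontra
        omega
    have hlen' : 2 * i + 1 ≤ L u := by
      have := hlen _ _ p hiaug
      rwa [hp1] at this
    have hsub : F u ⊆ AEF := by
      intro e he
      simp only [hF, Finset.mem_image, Finset.mem_range] at he
      obtain ⟨k, hk, rfl⟩ := he
      rw [hAEF, Set.mem_toFinset, SimpleGraph.Subgraph.mem_edgeSet]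
      exact A_adj_step H (hvL u (2*k+1) (by omega)) (by omega)
    have hcard : (F u).card = L u / 2 := by
      simp only [hF]
      rw [Finset.card_image_of_injOn, Finset.card_range]
      intro k hk k' hk' he
      rw [Finset.mem_coe, Finset.mem_range] at hk hk'
      rw [Sym2.eq_iff] at he
      rcases he with ⟨e1, _⟩ | ⟨e1, _⟩
      · have := (same_parity H hu1 hu1 (n := L u) (n' := L u) (hvL u) (hvL u)
          (by omega) (by omega) (by omega) e1).2
        omega
      · exfalso
        rcases Nat.lt_or_ge (2*k+1) (2*k'+2) with hlt | hge
        · exact cross_parity_self H (hvL u) hlt (by omega) (by omega) e1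
        · exact cross_parity_self H (hvL u) (show 2*k'+2 < 2*k+1 by omega)
            (by omega) (by omega) e1.symm
    exact ⟨⟨hlen', by omega⟩, hsub⟩
  -- fiber bound: each A-edge lies in at most two good runs
  have hfiber : ∀ e ∈ AEF, (GoodF.filter (fun u => e ∈ F u)).card ≤ 2 := by
    intro e _
    rcases Finset.eq_empty_or_nonempty (GoodF.filter (fun u => e ∈ F u)) with h0 | ⟨u₀, hu₀⟩
    · simp [h0]
    · have hu₀' := hu₀
      rw [Finset.mem_filter] at hu₀'
      obtain ⟨hu₀g, hu₀e⟩ := hu₀'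
      obtain ⟨⟨hu₀2, hu₀1⟩, h₀odd⟩ := hmemGood u₀ hu₀g
      have hsub2 : (GoodF.filter (fun u => e ∈ F u)) ⊆ {u₀, seq a b u₀ (L u₀)} := by
        intro u hu
        rw [Finset.mem_filter] at hu
        obtain ⟨hug, hue⟩ := hu
        obtain ⟨⟨hu2, hu1⟩, hodd⟩ := hmemGood u hug
        simp only [hF, Finset.mem_image, Finset.mem_range] at hue hu₀e
        obtain ⟨k, hk, hke⟩ := hue
        obtain ⟨k₀, hk₀, hk₀e⟩ := hu₀e
        rw [← hk₀e, Sym2.eq_iff] at hke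
        rcases hke with ⟨e1, _⟩ | ⟨e1, _⟩
        · have : u = u₀ := (same_parity H hu1 hu₀1 (n := L u) (n' := L u₀)
            (hvL u) (hvL u₀) (by omega) (by omega) (by omega) e1).1
          exact Finset.mem_insert.2 (Or.inl this)
        · -- cross parity: u₀ is the end of run u
          have hcross := cross_parity H hu₀1 (hvL u) (hsL u hu1 hu2) (hvL u₀)
            (k := 2*k+1) (by omega) (m := 2*k₀+2) (by omega) (by omega) e1
          have hrev := reverse_run H (hvL u) hcross.1
          have hrevseq : ∀ j ≤ L u, seq a b u₀ j = seq a b u (L u - j) := by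
            intro j hj
            rw [← hcross.2]
            exact hrev j hj
          have h0' : seq a b u₀ (L u) = u := by
            rw [hrevseq (L u) le_rfl, Nat.sub_self]
            rfl
          have hmem0 : ¬ cont A B a b u₀ (L u) := by
            rw [cont_odd hcross.1, h0']
            exact hu1
          have hcont' : ∀ s < L u, cont A B a b u₀ s := by
            intro s hs
            have heq := hrevseq s (by omega)
            rcases Nat.mod_two_eq_zero_or_one s with hp | hp
            · rw [cont_even hp, heq]
              obtain ⟨r, hr⟩ : ∃ r, L u - s = r + 1 := ⟨L u - s - 1, by omega⟩
              rw [hr]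
              refine mem_B_succ H (hvL u r ?_) ?_ <;> omega
            · rw [cont_odd hp, heq]
              obtain ⟨r, hr⟩ : ∃ r, L u - s = r + 1 := ⟨L u - s - 1, by omega⟩
              rw [hr]
              refine mem_A_succ H (hvL u r ?_) ?_ <;> omega
          have hLu₀ : L u₀ = L u := by
            have hle1 : L u₀ ≤ L u := Nat.sInf_le hmem0
            have hle2 : L u ≤ L u₀ := by
              by_contra hc
              push_neg at hc
              exact hsL u₀ hu₀1 hu₀2 (hcont' _ hc)
            omega
          refine Finset.mem_insert.2 (Or.inr ?_)
          rw [Finset.mem_singleton, hLu₀, h0']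
      calc (GoodF.filter (fun u => e ∈ F u)).card
          ≤ ({u₀, seq a b u₀ (L u₀)} : Finset V).card := Finset.card_le_card hsub2
        _ ≤ 2 := (Finset.card_insert_le _ _).trans (by simp)
  -- double counting
  have hsum1 : GoodF.card * i ≤ ∑ u ∈ GoodF, (F u).card := by
    have := Finset.card_nsmul_le_sum GoodF (fun u => (F u).card) i
      (fun u hu => (hgoodfacts u hu).1.2)
    simpa [smul_eq_mul] using this
  have hsum2 : ∑ u ∈ GoodF, (F u).card
      = ∑ e ∈ AEF, (GoodF.filter (fun u => e ∈ F u)).card := by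
    have step1 : ∀ u ∈ GoodF, (F u).card = (AEF.filter (fun e => e ∈ F u)).card := by
      intro u hu
      rw [Finset.filter_mem_eq_inter, Finset.inter_eq_right.2 (hgoodfacts u hu).2]
    rw [Finset.sum_congr rfl step1]
    simp_rw [Finset.card_filter]
    exact Finset.sum_comm
  have hsum3 : ∑ e ∈ AEF, (GoodF.filter (fun u => e ∈ F u)).card ≤ 2 * AEF.card := by
    calc ∑ e ∈ AEF, (GoodF.filter (fun u => e ∈ F u)).card
        ≤ ∑ _e ∈ AEF, 2 := Finset.sum_le_sum hfiber
      _ = 2 * AEF.card := by rw [Finset.sum_const, smul_eq_mul, mul_comm]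
  have hAEFcard : AEF.card = A.edgeSet.ncard := (Set.ncard_eq_toFinset_card' _).symm
  have hfinal : 2 * d * i ≤ 2 * A.edgeSet.ncard := by
    calc 2 * d * i ≤ GoodF.card * i := Nat.mul_le_mul_right i hGoodcard
      _ ≤ ∑ u ∈ GoodF, (F u).card := hsum1
      _ = ∑ e ∈ AEF, (GoodF.filter (fun u => e ∈ F u)).card := hsum2
      _ ≤ 2 * AEF.card := hsum3
      _ = 2 * A.edgeSet.ncard := by rw [hAEFcard]
  have h2 : 2 * (i * d) ≤ 2 * A.edgeSet.ncard := by
    calc 2 * (i * d) = 2 * d * i := by ring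
      _ ≤ 2 * A.edgeSet.ncard := hfinal
  exact Nat.le_of_mul_le_mul_left h2 (by norm_num)


end HKaux

/-- Hopcroft–Karp phase bound: if a sequence of matchings `M 0, …, M T` has strictly
increasing sizes, the shortest augmenting path length after phase `i` is at least `2i + 1`,
and `M T` is a maximum matching of size `κ`, then `T ≤ 2⌈√κ⌉ + 1`. -/
theorem stmt_9 {V : Type*} [Fintype V] (G : SimpleGraph V) (c : V → Bool)
    (hbip : ∀ u v, G.Adj u v → c u ≠ c v)
    (κ T : ℕ) (M : ℕ → G.Subgraph)
    (hmatch : ∀ i ≤ T, (M i).IsMatching)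
    (hmono : ∀ i < T, (M i).edgeSet.ncard < (M (i + 1)).edgeSet.ncard)
    (hlen : ∀ i ≤ T, ∀ (u v : V) (p : G.Walk u v), (M i).IsAugPath p → 2 * i + 1 ≤ p.length)
    (hub : ∀ N : G.Subgraph, N.IsMatching → N.edgeSet.ncard ≤ κ)
    (hfinal : (M T).edgeSet.ncard = κ) :
    T ≤ 2 * ⌈Real.sqrt κ⌉₊ + 1 := by
  by_contra hT
  push_neg at hT
  set s := ⌈Real.sqrt κ⌉₊ with hs
  have hs2 : κ ≤ s * s := by
    have h1 : Real.sqrt κ ≤ (s : ℝ) := Nat.le_ceil _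
    have h2 : (κ : ℝ) = Real.sqrt κ * Real.sqrt κ := (Real.mul_self_sqrt (by positivity)).symm
    have h3 : (κ : ℝ) ≤ (s : ℝ) * s := by
      rw [h2]
      exact mul_le_mul h1 h1 (Real.sqrt_nonneg _) (Nat.cast_nonneg _)
    exact_mod_cast h3
  set i := s + 1 with hi
  have hiT : i ≤ T := by omega
  have hmono' : ∀ j, i + j ≤ T → (M i).edgeSet.ncard + j ≤ (M (i + j)).edgeSet.ncard := by
    intro j
    induction j with
    | zero => simp
    | succ j ih =>
      intro h
      have h1 := hmono (i + j) (by omega)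
      have h2 := ih (by omega)
      have h3 : i + (j + 1) = (i + j) + 1 := rfl
      rw [h3]
      omega
  have hkey : (M i).edgeSet.ncard + (T - i) ≤ κ := by
    have := hmono' (T - i) (by omega)
    rw [show i + (T - i) = T by omega, hfinal] at this
    omega
  have hub_i : (M i).edgeSet.ncard ≤ κ := hub _ (hmatch i hiT)
  set d := κ - (M i).edgeSet.ncard with hdd
  have hd : (M i).edgeSet.ncard + d = (M T).edgeSet.ncard := by rw [hfinal]; omega
  have hcount := HKaux.hk_count (hmatch i hiT) (hmatch T le_rfl) i (hlen i hiT) hd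
  have hdge : s + 1 ≤ d := by omega
  have h1 : (s + 1) * (s + 1) ≤ i * d := Nat.mul_le_mul (le_of_eq hi.symm) hdge
  have h4 : s * s + 2 * s + 1 ≤ i * d := by
    calc s * s + 2 * s + 1 = (s + 1) * (s + 1) := by ring
      _ ≤ i * d := h1
  have h5 : i * d ≤ s * s := le_trans (hcount.trans hub_i) hs2
  linarith
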